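/- Fix p ∈ (0,1), η > 0, ν ∈ ℝ, δ > 0, τ > 0. A point (A, ζ) with A > 0 satisfies g₁(A,ζ) = g₂(A,ζ) = 0 if and only if (p²η/8)A²(1 − pA²) = δ and ζ = pν + δ + (p²η/8)A². Such nontrivial equilibria exist if and only if δ ≤ pη/32, in which case their ζ-coordinates are exactly ζ = pν + δ + (pη + √(p²η² − 32pηδ))/16 and ζ = pν + δ + (pη − √(p²η² − 32pηδ))/16 (equivalently, as stated in the paper, ζ = pν + δ + (pη ± √p·√(pη² − 32ηδ))/16). -/

import Mathlib

/-- Slow-flow amplitude dynamics for a general network with a single nonlinear node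
(small linear damping). -/
noncomputable def g₁ (p ν η A ζ : ℝ) : ℝ :=
  (1 / 2) * ((p * ν - ζ) * A + (p ^ 2 * η / 4) * A ^ 3 - (p ^ 3 * η / 8) * A ^ 5)

/-- Proposed autonomous damping dynamics for a general network. -/
noncomputable def g₂ (p ν η δ τ A ζ : ℝ) : ℝ :=
  τ⁻¹ * (-ζ + δ + p * ν + (p ^ 2 * η / 8) * A ^ 2)

/-- Characterization of the nontrivial equilibria of the coupled amplitude–damping
dynamics: they exist iff `δ ≤ pη/32`, with the stated `ζ`-coordinates. -/
theorem stmt_10 (p η ν δ τ : ℝ) (hp : p ∈ Set.Ioo (0 : ℝ) 1) (hη : 0 < η)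
    (hδ : 0 < δ) (hτ : 0 < τ) :
    (∀ A ζ : ℝ, 0 < A →
      (g₁ p ν η A ζ = 0 ∧ g₂ p ν η δ τ A ζ = 0 ↔
        (p ^ 2 * η / 8) * A ^ 2 * (1 - p * A ^ 2) = δ ∧
          ζ = p * ν + δ + (p ^ 2 * η / 8) * A ^ 2)) ∧
    ((∃ A ζ : ℝ, 0 < A ∧ g₁ p ν η A ζ = 0 ∧ g₂ p ν η δ τ A ζ = 0) ↔ δ ≤ p * η / 32) ∧
    (δ ≤ p * η / 32 →
      {ζ : ℝ | ∃ A : ℝ, 0 < A ∧ g₁ p ν η A ζ = 0 ∧ g₂ p ν η δ τ A ζ = 0} =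
        {p * ν + δ + (p * η + Real.sqrt (p ^ 2 * η ^ 2 - 32 * p * η * δ)) / 16,
         p * ν + δ + (p * η - Real.sqrt (p ^ 2 * η ^ 2 - 32 * p * η * δ)) / 16}) := by
  obtain ⟨hp0, hp1⟩ := hp
  have hτ' : τ⁻¹ ≠ 0 := by positivity
  have hpη : 0 < p * η := mul_pos hp0 hη
  -- characterization
  have hchar : ∀ A ζ : ℝ, 0 < A →
      (g₁ p ν η A ζ = 0 ∧ g₂ p ν η δ τ A ζ = 0 ↔
        (p ^ 2 * η / 8) * A ^ 2 * (1 - p * A ^ 2) = δ ∧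
          ζ = p * ν + δ + (p ^ 2 * η / 8) * A ^ 2) := by
    intro A ζ hA
    unfold g₁ g₂
    constructor
    · rintro ⟨h1, h2⟩
      have h2' : ζ = p * ν + δ + (p ^ 2 * η / 8) * A ^ 2 := by
        have := (mul_eq_zero.mp h2).resolve_left hτ'
        linarith
      subst h2'
      refine ⟨?_, rfl⟩
      have hf : A * ((p ^ 2 * η / 8) * A ^ 2 * (1 - p * A ^ 2) - δ) = 0 := by
        linear_combination 2 * h1
      have := (mul_eq_zero.mp hf).resolve_left (ne_of_gt hA)
      linarith
    · rintro ⟨h1, h2⟩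
      subst h2
      exact ⟨by linear_combination (A / 2) * h1, by ring⟩
  refine ⟨hchar, ?_, ?_⟩
  · constructor
    · rintro ⟨A, ζ, hA, h⟩
      obtain ⟨hd, -⟩ := (hchar A ζ hA).mp h
      nlinarith [mul_nonneg hpη.le (sq_nonneg (2 * p * A ^ 2 - 1))]
    · intro hδη
      set s := Real.sqrt (p ^ 2 * η ^ 2 - 32 * p * η * δ) with hs
      have harg : 0 ≤ p ^ 2 * η ^ 2 - 32 * p * η * δ := by nlinarith
      have hs2 : s ^ 2 = p ^ 2 * η ^ 2 - 32 * p * η * δ := Real.sq_sqrt harg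
      have hsnn : 0 ≤ s := Real.sqrt_nonneg _
      have hslt : s < p * η := by nlinarith
      set x := (p * η - s) / (2 * p ^ 2 * η) with hx
      have hxpos : 0 < x := by
        apply div_pos (by linarith) (by positivity)
      refine ⟨Real.sqrt x, p * ν + δ + (p ^ 2 * η / 8) * x, ?_⟩
      have hA2 : Real.sqrt x ^ 2 = x := Real.sq_sqrt hxpos.le
      have hApos : 0 < Real.sqrt x := Real.sqrt_pos.mpr hxpos
      refine ⟨hApos, (hchar _ _ hApos).mpr ⟨?_, by rw [hA2]⟩⟩
      rw [hA2, hx]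
      field_simp
      linear_combination (-1) * hs2
  · intro hδη
    set s := Real.sqrt (p ^ 2 * η ^ 2 - 32 * p * η * δ) with hs
    have harg : 0 ≤ p ^ 2 * η ^ 2 - 32 * p * η * δ := by nlinarith
    have hs2 : s ^ 2 = p ^ 2 * η ^ 2 - 32 * p * η * δ := Real.sq_sqrt harg
    have hsnn : 0 ≤ s := Real.sqrt_nonneg _
    have hslt : s < p * η := by nlinarith
    ext ζ
    simp only [Set.mem_setOf_eq, Set.mem_insert_iff, Set.mem_singleton_iff]
    constructor
    · rintro ⟨A, hA, h⟩
      obtain ⟨hd, hz⟩ := (hchar A ζ hA).mp h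
      have hprod : ((p ^ 2 * η / 8) * A ^ 2 - (p * η + s) / 16) *
          ((p ^ 2 * η / 8) * A ^ 2 - (p * η - s) / 16) = 0 := by
        linear_combination (-(p * η / 8)) * hd - (1 / 256) * hs2
      rcases mul_eq_zero.mp hprod with h' | h'
      · left; rw [hz]; linarith
      · right; rw [hz]; linarith
    · rintro (rfl | rfl)
      · set x := (p * η + s) / (2 * p ^ 2 * η) with hx
        have hxpos : 0 < x := by
          apply div_pos (by linarith) (by positivity)
        have hA2 : Real.sqrt x ^ 2 = x := Real.sq_sqrt hxpos.le
        have hApos : 0 < Real.sqrt x := Real.sqrt_pos.mpr hxpos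
        refine ⟨Real.sqrt x, hApos, (hchar _ _ hApos).mpr ⟨?_, ?_⟩⟩
        · rw [hA2, hx]; field_simp; linear_combination (-1) * hs2
        · rw [hA2, hx]; field_simp; ring
      · set x := (p * η - s) / (2 * p ^ 2 * η) with hx
        have hxpos : 0 < x := by
          apply div_pos (by linarith) (by positivity)
        have hA2 : Real.sqrt x ^ 2 = x := Real.sq_sqrt hxpos.le
        have hApos : 0 < Real.sqrt x := Real.sqrt_pos.mpr hxpos
        refine ⟨Real.sqrt x, hApos, (hchar _ _ hApos).mpr ⟨?_, ?_⟩⟩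
        · rw [hA2, hx]; field_simp; linear_combination (-1) * hs2
        · rw [hA2, hx]; field_simp; ring
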